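/- arXiv:1409.1705 — 2 statements merged into one kernel-verified Lean document; each statement's English description precedes it below -/
import Mathlib

section
/- Let N ≥ 1 and let J be a fixed N×N complex matrix. Let γ be the Gaussian probability measure on the real vector space of N×N complex Hermitian matrices obtained by normalizing the density exp(−(1/2)·Tr(A²)) with respect to a translation-invariant measure. For λ in the cut plane ℂ∖(−∞,0], define Z(λ) = ∫ det( I − i·√(λ/N)·A )^{−N} · exp( −N·Tr( J·(I − i·√(λ/N)·A)⁻¹·J† ) ) dγ(A), where √λ is the principal branch of the complex square root. Then for every such λ the integrand is γ-integrable, and the function λ ↦ Z(λ) is analytic (complex differentiable) on ℂ∖(−∞,0]. -/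
open MeasureTheory
open scoped Matrix

/-- The product σ-algebra on matrices (entrywise). -/
instance matrixMeasurableSpace {m n α : Type*} [MeasurableSpace α] :
    MeasurableSpace (Matrix m n α) :=
  inferInstanceAs (MeasurableSpace (m → n → α))

instance matrixBorelSpace {m n : Type*} [Countable m] [Countable n] :
    BorelSpace (Matrix m n ℂ) :=
  inferInstanceAs (BorelSpace (m → n → ℂ))

noncomputable section AuxSection

namespace GFAux

/-! ### Elementary lemmas about the slit plane and the principal square root -/

lemma sqrt_re_pos {z : ℂ} (hz : z ∈ Complex.slitPlane) : 0 < (z ^ ((1:ℂ)/2)).re := by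
  have hz0 : z ≠ 0 := Complex.slitPlane_ne_zero hz
  rw [Complex.cpow_def_of_ne_zero hz0, Complex.exp_re]
  apply mul_pos (Real.exp_pos _)
  have him : (Complex.log z * ((1:ℂ)/2)).im = Complex.arg z / 2 := by
    simp [Complex.mul_im, Complex.log_im]
    ring
  rw [him]
  have h1 : -Real.pi < Complex.arg z := Complex.neg_pi_lt_arg z
  have h2 : Complex.arg z < Real.pi := Complex.arg_lt_pi_iff.mpr (by
    rcases Complex.mem_slitPlane_iff.mp hz with h | h
    · exact Or.inl h.le
    · exact Or.inr h)
  apply Real.cos_pos_of_mem_Ioo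
  constructor
  · linarith
  · linarith

lemma scalar_lb {μ : ℂ} (hμ : 0 < μ.re) (d : ℝ) :
    μ.re / ‖μ‖ ≤ ‖1 - Complex.I * μ * d‖ := by
  have hμ0 : μ ≠ 0 := fun h => by simp [h] at hμ
  have habs : 0 < ‖μ‖ := norm_pos_iff.mpr hμ0
  rw [div_le_iff₀ habs]
  have key : ((1 - Complex.I * μ * d) * (starRingEnd ℂ) μ).re = μ.re := by
    simp [Complex.mul_re, Complex.sub_re, Complex.sub_im, Complex.mul_im,
      Complex.I_re, Complex.I_im]
    ring
  calc μ.re = ((1 - Complex.I * μ * d) * (starRingEnd ℂ) μ).re := key.symm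
    _ ≤ ‖(1 - Complex.I * μ * d) * (starRingEnd ℂ) μ‖ := Complex.re_le_norm _
    _ = ‖1 - Complex.I * μ * d‖ * ‖μ‖ := by
        rw [norm_mul, Complex.norm_conj]

lemma div_nat_mem_slitPlane {z : ℂ} (hz : z ∈ Complex.slitPlane) {n : ℕ} (hn : 0 < n) :
    z / (n : ℂ) ∈ Complex.slitPlane := by
  have hn' : (0:ℝ) < n := by exact_mod_cast hn
  have hcast : (n : ℂ) = ((n : ℝ) : ℂ) := by push_cast; ring
  rw [Complex.mem_slitPlane_iff] at hz ⊢
  rw [hcast, Complex.div_ofReal_re, Complex.div_ofReal_im]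
  rcases hz with h | h
  · exact Or.inl (by positivity)
  · exact Or.inr (div_ne_zero h hn'.ne')

lemma cut_eq_slit : {z : ℂ | ¬ (z.im = 0 ∧ z.re ≤ 0)} = Complex.slitPlane := by
  ext z
  simp only [Set.mem_setOf_eq, Complex.mem_slitPlane_iff, not_and_or, not_le]
  tauto

/-! ### Conjugation by a unitary matrix -/

section conj
variable {n : ℕ} {U : Matrix (Fin n) (Fin n) ℂ}

lemma det_conj_diag (hU1 : star U * U = 1) (w : Fin n → ℂ) :
    Matrix.det (U * Matrix.diagonal w * star U) = ∏ k, w k := by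
  have h2 : Matrix.det (star U) * Matrix.det U = 1 := by
    rw [← Matrix.det_mul, hU1, Matrix.det_one]
  rw [Matrix.det_mul, Matrix.det_mul, Matrix.det_diagonal,
    show Matrix.det U * (∏ k, w k) * Matrix.det (star U)
      = (∏ k, w k) * (Matrix.det (star U) * Matrix.det U) from by ring, h2, mul_one]

lemma inv_conj_diag (hU1 : star U * U = 1) (hU2 : U * star U = 1) {w : Fin n → ℂ}
    (hw : ∀ k, w k ≠ 0) :
    (U * Matrix.diagonal w * star U)⁻¹ = U * Matrix.diagonal (fun k => (w k)⁻¹) * star U := by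
  apply Matrix.inv_eq_right_inv
  have hd : Matrix.diagonal w * Matrix.diagonal (fun k => (w k)⁻¹) = 1 := by
    rw [Matrix.diagonal_mul_diagonal]
    rw [show (fun k => w k * (w k)⁻¹) = fun _ => (1:ℂ) from
      funext fun k => mul_inv_cancel₀ (hw k), Matrix.diagonal_one]
  calc U * Matrix.diagonal w * star U * (U * Matrix.diagonal (fun k => (w k)⁻¹) * star U)
      = U * (Matrix.diagonal w * ((star U * U) * Matrix.diagonal (fun k => (w k)⁻¹))) * star U := by
        simp only [Matrix.mul_assoc]
    _ = 1 := by rw [hU1, Matrix.one_mul, hd, Matrix.mul_one, hU2]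

lemma trace_conj_re (C : Matrix (Fin n) (Fin n) ℂ) :
    Matrix.trace (C * Cᴴ) = ((∑ i, ∑ k, Complex.normSq (C i k) : ℝ) : ℂ) := by
  simp only [Matrix.trace, Matrix.diag, Matrix.mul_apply, Matrix.conjTranspose_apply]
  push_cast
  refine Finset.sum_congr rfl fun i _ => Finset.sum_congr rfl fun k _ => ?_
  rw [RCLike.star_def, Complex.mul_conj]

lemma trace_diag_bound (C : Matrix (Fin n) (Fin n) ℂ) {w : Fin n → ℂ} {W : ℝ}
    (hW : ∀ k, ‖w k‖ ≤ W) :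
    ‖Matrix.trace (C * Matrix.diagonal w * Cᴴ)‖ ≤ W * (Matrix.trace (C * Cᴴ)).re := by
  have h1 : Matrix.trace (C * Matrix.diagonal w * Cᴴ)
      = ∑ i, ∑ k, w k * ((Complex.normSq (C i k) : ℝ) : ℂ) := by
    simp only [Matrix.trace, Matrix.diag, Matrix.mul_apply, Matrix.mul_diagonal,
      Matrix.conjTranspose_apply]
    refine Finset.sum_congr rfl fun i _ => Finset.sum_congr rfl fun k _ => ?_
    rw [show (∑ j, C i j * Matrix.diagonal w j k) = C i k * w k from by
      simp [Matrix.diagonal_apply]]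
    rw [RCLike.star_def, mul_comm (C i k) (w k), mul_assoc, Complex.mul_conj]
  have h2 : (Matrix.trace (C * Cᴴ)).re = ∑ i, ∑ k, Complex.normSq (C i k) := by
    rw [trace_conj_re, Complex.ofReal_re]
  rw [h1, h2, Finset.mul_sum]
  refine (norm_sum_le _ _).trans (Finset.sum_le_sum fun i _ => ?_)
  rw [Finset.mul_sum]
  refine (norm_sum_le _ _).trans (Finset.sum_le_sum fun k _ => ?_)
  rw [norm_mul, Complex.norm_real, Real.norm_eq_abs, _root_.abs_of_nonneg (Complex.normSq_nonneg _)]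
  exact mul_le_mul_of_nonneg_right (hW k) (Complex.normSq_nonneg _)

lemma traceJJ_re_nonneg (J : Matrix (Fin n) (Fin n) ℂ) : 0 ≤ (Matrix.trace (J * Jᴴ)).re := by
  rw [trace_conj_re, Complex.ofReal_re]
  refine Finset.sum_nonneg fun i _ => Finset.sum_nonneg fun k _ => Complex.normSq_nonneg _

end conj

/-! ### The key resolvent bounds via the spectral theorem -/

lemma key_facts {n : ℕ} {A : Matrix (Fin n) (Fin n) ℂ} (hA : A.IsHermitian) {μ : ℂ}
    (hμ : 0 < μ.re) (J : Matrix (Fin n) (Fin n) ℂ) :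
    (μ.re / ‖μ‖) ^ n
        ≤ ‖Matrix.det (1 - (Complex.I * μ) • A)‖ ∧
      ‖Matrix.trace (J * ((1 - (Complex.I * μ) • A))⁻¹ * Jᴴ)‖
        ≤ (‖μ‖ / μ.re) * (Matrix.trace (J * Jᴴ)).re := by
  classical
  set U : Matrix (Fin n) (Fin n) ℂ := ↑(Matrix.IsHermitian.eigenvectorUnitary hA) with hUdef
  have hUmem := (Matrix.IsHermitian.eigenvectorUnitary hA).2
  have hU1 : star U * U = 1 := Matrix.mem_unitaryGroup_iff'.mp hUmem
  have hU2 : U * star U = 1 := Matrix.mem_unitaryGroup_iff.mp hUmem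
  set w : Fin n → ℂ := fun k => 1 - Complex.I * μ * ((hA.eigenvalues k : ℝ) : ℂ) with hwdef
  have hμ0 : μ ≠ 0 := fun h => by simp [h] at hμ
  have habs : 0 < ‖μ‖ := norm_pos_iff.mpr hμ0
  have hb : 0 < μ.re / ‖μ‖ := div_pos hμ habs
  have hwlb : ∀ k, μ.re / ‖μ‖ ≤ ‖w k‖ := fun k => scalar_lb hμ _
  have hw0 : ∀ k, w k ≠ 0 := fun k => by
    intro h
    have := hwlb k
    rw [h] at this
    simp only [norm_zero] at this
    linarith
  have hM : (1 : Matrix (Fin n) (Fin n) ℂ) - (Complex.I * μ) • A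
      = U * Matrix.diagonal w * star U := by
    calc (1 : Matrix (Fin n) (Fin n) ℂ) - (Complex.I * μ) • A
        = U * 1 * star U - (Complex.I * μ) •
            (U * Matrix.diagonal (RCLike.ofReal ∘ hA.eigenvalues) * star U) := by
          rw [Matrix.mul_one, hU2]
          conv_lhs => rw [hA.spectral_theorem]
          rfl
      _ = U * (1 - (Complex.I * μ) • Matrix.diagonal (RCLike.ofReal ∘ hA.eigenvalues)) * star U := by
          rw [Matrix.mul_sub, Matrix.sub_mul, Matrix.mul_smul, Matrix.smul_mul]
      _ = U * Matrix.diagonal w * star U := by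
          rw [← Matrix.diagonal_smul, ← Matrix.diagonal_one, ← Matrix.diagonal_sub]
          congr 1
  constructor
  · rw [hM, det_conj_diag hU1, norm_prod]
    calc (μ.re / ‖μ‖) ^ n = ∏ _k : Fin n, (μ.re / ‖μ‖) := by
          rw [Finset.prod_const, Finset.card_univ, Fintype.card_fin]
      _ ≤ ∏ k, ‖w k‖ :=
          Finset.prod_le_prod (fun _ _ => hb.le) (fun k _ => hwlb k)
  · rw [hM, inv_conj_diag hU1 hU2 hw0]
    have hrw : J * (U * Matrix.diagonal (fun k => (w k)⁻¹) * star U) * Jᴴ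
        = (J * U) * Matrix.diagonal (fun k => (w k)⁻¹) * (J * U)ᴴ := by
      rw [Matrix.conjTranspose_mul, ← Matrix.star_eq_conjTranspose U]
      simp only [Matrix.mul_assoc]
    have hJJ : (J * U) * (J * U)ᴴ = J * Jᴴ := by
      rw [Matrix.conjTranspose_mul, ← Matrix.star_eq_conjTranspose U,
        show J * U * (star U * Jᴴ) = J * (U * star U) * Jᴴ from by simp only [Matrix.mul_assoc],
        hU2, Matrix.mul_one]
    have hWk : ∀ k, ‖(w k)⁻¹‖ ≤ ‖μ‖ / μ.re := by
      intro k
      rw [norm_inv]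
      have h1 : ‖μ‖ / μ.re = (μ.re / ‖μ‖)⁻¹ := by
        rw [inv_div]
      rw [h1]
      exact inv_anti₀ hb (hwlb k)
    have := trace_diag_bound (J * U) hWk
    rw [hJJ] at this
    rw [hrw]
    exact this

lemma norm_integrand_le {n : ℕ} {A : Matrix (Fin n) (Fin n) ℂ} (hA : A.IsHermitian) {μ : ℂ}
    (hμ : 0 < μ.re) (J : Matrix (Fin n) (Fin n) ℂ) :
    ‖(Matrix.det ((1 : Matrix (Fin n) (Fin n) ℂ) - (Complex.I * μ) • A)) ^ (-(n:ℤ)) *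
        Complex.exp (-(n:ℂ) * Matrix.trace
          (J * ((1 : Matrix (Fin n) (Fin n) ℂ) - (Complex.I * μ) • A)⁻¹ * Jᴴ))‖
      ≤ (‖μ‖ / μ.re) ^ (n*n) *
          Real.exp (n * (‖μ‖ / μ.re) * (Matrix.trace (J * Jᴴ)).re) := by
  obtain ⟨h1, h2⟩ := key_facts hA hμ J
  have hμ0 : μ ≠ 0 := fun h => by simp [h] at hμ
  have habs : 0 < ‖μ‖ := norm_pos_iff.mpr hμ0
  have hb : 0 < μ.re / ‖μ‖ := div_pos hμ habs
  have hW0 : 0 < ‖μ‖ / μ.re := div_pos habs hμ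
  set D := Matrix.det ((1 : Matrix (Fin n) (Fin n) ℂ) - (Complex.I * μ) • A) with hD
  have hDpos : 0 < ‖D‖ := lt_of_lt_of_le (pow_pos hb n) h1
  rw [norm_mul, norm_zpow, Complex.norm_exp]
  have hfac1 : ‖D‖ ^ (-(n:ℤ)) ≤ (‖μ‖ / μ.re) ^ (n*n) := by
    rw [zpow_neg, zpow_natCast]
    have h3 : (μ.re / ‖μ‖) ^ (n*n) ≤ ‖D‖ ^ n := by
      rw [pow_mul]
      exact pow_le_pow_left₀ (pow_nonneg hb.le n) h1 n
    have h4 : (‖D‖ ^ n)⁻¹ ≤ ((μ.re / ‖μ‖) ^ (n*n))⁻¹ :=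
      inv_anti₀ (pow_pos hb (n*n)) h3
    refine h4.trans ?_
    rw [← inv_pow, inv_div]
  have hfac2 : Real.exp ((-(n:ℂ) * Matrix.trace
        (J * ((1 : Matrix (Fin n) (Fin n) ℂ) - (Complex.I * μ) • A)⁻¹ * Jᴴ)).re)
      ≤ Real.exp (n * (‖μ‖ / μ.re) * (Matrix.trace (J * Jᴴ)).re) := by
    apply Real.exp_le_exp.mpr
    calc (-(n:ℂ) * Matrix.trace
          (J * ((1 : Matrix (Fin n) (Fin n) ℂ) - (Complex.I * μ) • A)⁻¹ * Jᴴ)).re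
        ≤ ‖-(n:ℂ) * Matrix.trace
          (J * ((1 : Matrix (Fin n) (Fin n) ℂ) - (Complex.I * μ) • A)⁻¹ * Jᴴ)‖ :=
          Complex.re_le_norm _
      _ = n * ‖Matrix.trace
          (J * ((1 : Matrix (Fin n) (Fin n) ℂ) - (Complex.I * μ) • A)⁻¹ * Jᴴ)‖ := by
          rw [norm_mul, norm_neg]
          norm_num
      _ ≤ n * ((‖μ‖ / μ.re) * (Matrix.trace (J * Jᴴ)).re) :=
          mul_le_mul_of_nonneg_left h2 (Nat.cast_nonneg n)
      _ = n * (‖μ‖ / μ.re) * (Matrix.trace (J * Jᴴ)).re := by ring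
  calc ‖D‖ ^ (-(n:ℤ)) * Real.exp _
      ≤ (‖μ‖ / μ.re) ^ (n*n) * Real.exp (n * (‖μ‖ / μ.re) *
          (Matrix.trace (J * Jᴴ)).re) := by
        apply mul_le_mul hfac1 hfac2 (Real.exp_pos _).le (by positivity)

lemma det_resolvent_ne_zero {n : ℕ} {A : Matrix (Fin n) (Fin n) ℂ} (hA : A.IsHermitian) {μ : ℂ}
    (hμ : 0 < μ.re) :
    Matrix.det ((1 : Matrix (Fin n) (Fin n) ℂ) - (Complex.I * μ) • A) ≠ 0 := by
  obtain ⟨h1, -⟩ := key_facts hA hμ (0 : Matrix (Fin n) (Fin n) ℂ)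
  have hμ0 : μ ≠ 0 := fun h => by simp [h] at hμ
  have hb : 0 < μ.re / ‖μ‖ := div_pos hμ (norm_pos_iff.mpr hμ0)
  intro h
  rw [h, norm_zero] at h1
  exact absurd h1 (not_le.mpr (pow_pos hb n))

/-! ### The integrand -/

def integrand (N : ℕ) (J : Matrix (Fin N) (Fin N) ℂ) (lam : ℂ)
    (A : Matrix (Fin N) (Fin N) ℂ) : ℂ :=
  (Matrix.det ((1 : Matrix (Fin N) (Fin N) ℂ) -
      (Complex.I * (lam / (N : ℂ)) ^ ((1:ℂ)/2)) • A)) ^ (-(N : ℤ)) *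
    Complex.exp (-(N : ℂ) * Matrix.trace
      (J * ((1 : Matrix (Fin N) (Fin N) ℂ) -
        (Complex.I * (lam / (N : ℂ)) ^ ((1:ℂ)/2)) • A)⁻¹ * Jᴴ))

lemma integrand_eq (N : ℕ) (J : Matrix (Fin N) (Fin N) ℂ) (lam : ℂ)
    (A : Matrix (Fin N) (Fin N) ℂ) :
    integrand N J lam A =
      (Matrix.det ((1 : Matrix (Fin N) (Fin N) ℂ) -
          (Complex.I * (lam / (N : ℂ)) ^ ((1:ℂ)/2)) • A)) ^ (-(N : ℤ)) *
        Complex.exp (-(N : ℂ) *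
          ((Matrix.det ((1 : Matrix (Fin N) (Fin N) ℂ) -
              (Complex.I * (lam / (N : ℂ)) ^ ((1:ℂ)/2)) • A))⁻¹ *
            Matrix.trace (J * Matrix.adjugate ((1 : Matrix (Fin N) (Fin N) ℂ) -
              (Complex.I * (lam / (N : ℂ)) ^ ((1:ℂ)/2)) • A) * Jᴴ))) := by
  unfold integrand
  rw [Matrix.inv_def, Ring.inverse_eq_inv, Matrix.mul_smul, Matrix.smul_mul,
    Matrix.trace_smul, smul_eq_mul]

/-! ### Differentiability in the parameter -/

lemma diffAt_det {n : ℕ} {f : ℂ → Matrix (Fin n) (Fin n) ℂ} {z : ℂ}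
    (h : ∀ i j, DifferentiableAt ℂ (fun w => f w i j) z) :
    DifferentiableAt ℂ (fun w => (f w).det) z := by
  simp only [Matrix.det_apply']
  apply DifferentiableAt.fun_sum
  intro σ _
  apply DifferentiableAt.const_mul
  apply DifferentiableAt.fun_finsetProd
  intro i _
  exact h (σ i) i

lemma diffAt_adjugate {n : ℕ} {f : ℂ → Matrix (Fin n) (Fin n) ℂ} {z : ℂ}
    (h : ∀ i j, DifferentiableAt ℂ (fun w => f w i j) z) (i j : Fin n) :
    DifferentiableAt ℂ (fun w => (f w).adjugate i j) z := by
  simp only [Matrix.adjugate_apply]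
  apply diffAt_det
  intro a b
  rcases eq_or_ne a j with rfl | hne
  · simp only [Matrix.updateRow_self]
    exact differentiableAt_const _
  · simp only [Matrix.updateRow_ne hne]
    exact h a b

lemma diffAt_traceJBJ {n : ℕ} (J : Matrix (Fin n) (Fin n) ℂ) {f : ℂ → Matrix (Fin n) (Fin n) ℂ}
    {z : ℂ} (h : ∀ i j, DifferentiableAt ℂ (fun w => f w i j) z) :
    DifferentiableAt ℂ (fun w => Matrix.trace (J * f w * Jᴴ)) z := by
  have hrw : (fun w => Matrix.trace (J * f w * Jᴴ))
      = fun w => ∑ i, ∑ k, (∑ l, J i l * f w l k) * Jᴴ k i := by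
    funext w
    simp [Matrix.trace, Matrix.diag, Matrix.mul_apply]
  rw [hrw]
  apply DifferentiableAt.fun_sum
  intro i _
  apply DifferentiableAt.fun_sum
  intro k _
  apply DifferentiableAt.mul_const
  apply DifferentiableAt.fun_sum
  intro l _
  exact (h l k).const_mul _

lemma f_diffAt {N : ℕ} (hN : 0 < N) (J : Matrix (Fin N) (Fin N) ℂ)
    {A : Matrix (Fin N) (Fin N) ℂ} (hA : A.IsHermitian) {z : ℂ}
    (hz : z ∈ Complex.slitPlane) :
    DifferentiableAt ℂ (fun lam => integrand N J lam A) z := by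
  have hrw : (fun lam => integrand N J lam A) = fun lam =>
      (Matrix.det ((1 : Matrix (Fin N) (Fin N) ℂ) -
          (Complex.I * (lam / (N : ℂ)) ^ ((1:ℂ)/2)) • A)) ^ (-(N : ℤ)) *
        Complex.exp (-(N : ℂ) *
          ((Matrix.det ((1 : Matrix (Fin N) (Fin N) ℂ) -
              (Complex.I * (lam / (N : ℂ)) ^ ((1:ℂ)/2)) • A))⁻¹ *
            Matrix.trace (J * Matrix.adjugate ((1 : Matrix (Fin N) (Fin N) ℂ) -
              (Complex.I * (lam / (N : ℂ)) ^ ((1:ℂ)/2)) • A) * Jᴴ))) :=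
    funext fun lam => integrand_eq N J lam A
  rw [hrw]
  have hzdiv : z / (N:ℂ) ∈ Complex.slitPlane := div_nat_mem_slitPlane hz hN
  have hre : 0 < ((z/(N:ℂ)) ^ ((1:ℂ)/2)).re := sqrt_re_pos hzdiv
  have hdetne : Matrix.det ((1 : Matrix (Fin N) (Fin N) ℂ) -
      (Complex.I * (z/(N:ℂ)) ^ ((1:ℂ)/2)) • A) ≠ 0 := det_resolvent_ne_zero hA hre
  have hc : DifferentiableAt ℂ (fun lam : ℂ => Complex.I * (lam/(N:ℂ)) ^ ((1:ℂ)/2)) z := by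
    apply DifferentiableAt.const_mul
    exact DifferentiableAt.cpow (differentiableAt_id.div_const _) (differentiableAt_const _) hzdiv
  have hent : ∀ i j, DifferentiableAt ℂ (fun lam =>
      ((1 : Matrix (Fin N) (Fin N) ℂ) - (Complex.I * (lam/(N:ℂ)) ^ ((1:ℂ)/2)) • A) i j) z := by
    intro i j
    simp only [Matrix.sub_apply, Matrix.smul_apply, smul_eq_mul]
    exact (differentiableAt_const _).sub (hc.mul_const _)
  have hdet : DifferentiableAt ℂ (fun lam => Matrix.det ((1 : Matrix (Fin N) (Fin N) ℂ) -
      (Complex.I * (lam/(N:ℂ)) ^ ((1:ℂ)/2)) • A)) z := diffAt_det hent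
  have htr : DifferentiableAt ℂ (fun lam =>
      Matrix.trace (J * Matrix.adjugate ((1 : Matrix (Fin N) (Fin N) ℂ) -
        (Complex.I * (lam/(N:ℂ)) ^ ((1:ℂ)/2)) • A) * Jᴴ)) z :=
    diffAt_traceJBJ J (diffAt_adjugate hent)
  exact (hdet.zpow (Or.inl hdetne)).mul
    ((((hdet.inv hdetne).mul htr).const_mul (-(N:ℂ))).cexp)

/-! ### Measurability in the matrix variable -/

lemma f_meas (N : ℕ) (J : Matrix (Fin N) (Fin N) ℂ) (lam : ℂ) :
    Measurable (fun A : selfAdjoint (Matrix (Fin N) (Fin N) ℂ) =>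
      integrand N J lam (A : Matrix (Fin N) (Fin N) ℂ)) := by
  have hrw : (fun A : selfAdjoint (Matrix (Fin N) (Fin N) ℂ) =>
      integrand N J lam (A : Matrix (Fin N) (Fin N) ℂ))
      = fun A : selfAdjoint (Matrix (Fin N) (Fin N) ℂ) =>
      (Matrix.det ((1 : Matrix (Fin N) (Fin N) ℂ) -
          (Complex.I * (lam / (N : ℂ)) ^ ((1:ℂ)/2)) • (A : Matrix (Fin N) (Fin N) ℂ))) ^ (-(N : ℤ)) *
        Complex.exp (-(N : ℂ) *
          ((Matrix.det ((1 : Matrix (Fin N) (Fin N) ℂ) -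
              (Complex.I * (lam / (N : ℂ)) ^ ((1:ℂ)/2)) • (A : Matrix (Fin N) (Fin N) ℂ)))⁻¹ *
            Matrix.trace (J * Matrix.adjugate ((1 : Matrix (Fin N) (Fin N) ℂ) -
              (Complex.I * (lam / (N : ℂ)) ^ ((1:ℂ)/2)) • (A : Matrix (Fin N) (Fin N) ℂ)) * Jᴴ))) :=
    funext fun A => integrand_eq N J lam _
  rw [hrw]
  set c := Complex.I * (lam / (N : ℂ)) ^ ((1:ℂ)/2) with hc
  have hM : Continuous (fun B : Matrix (Fin N) (Fin N) ℂ =>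
      (1 : Matrix (Fin N) (Fin N) ℂ) - c • B) :=
    continuous_const.sub (continuous_id.const_smul c)
  have hdet : Measurable (fun A : selfAdjoint (Matrix (Fin N) (Fin N) ℂ) =>
      Matrix.det ((1 : Matrix (Fin N) (Fin N) ℂ) - c • (A : Matrix (Fin N) (Fin N) ℂ))) :=
    (hM.matrix_det).measurable.comp measurable_subtype_coe
  have htr : Measurable (fun A : selfAdjoint (Matrix (Fin N) (Fin N) ℂ) =>
      Matrix.trace (J * Matrix.adjugate ((1 : Matrix (Fin N) (Fin N) ℂ) -
        c • (A : Matrix (Fin N) (Fin N) ℂ)) * Jᴴ)) :=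
    ((((continuous_const.matrix_mul hM.matrix_adjugate).matrix_mul
      continuous_const).matrix_trace).measurable).comp measurable_subtype_coe
  have hzpow : Measurable (fun A : selfAdjoint (Matrix (Fin N) (Fin N) ℂ) =>
      (Matrix.det ((1 : Matrix (Fin N) (Fin N) ℂ) -
        c • (A : Matrix (Fin N) (Fin N) ℂ))) ^ (-(N : ℤ))) := by
    simp only [zpow_neg, zpow_natCast]
    exact (hdet.pow_const N).inv
  exact hzpow.mul ((measurable_const.mul (hdet.inv.mul htr)).cexp)

end GFAux

end AuxSection

open GFAux

/-- **Analyticity of the intermediate-field representation of the generating function**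
(Proposition after Lemma `boundresolvent`).  Let `γ` be the Gaussian probability measure
on Hermitian `N × N` matrices obtained by normalizing the density `exp(−½ Tr A²)` with
respect to some (any) nonzero translation-invariant measure `μ`, finite on compacts.
For `λ` in the cut plane `ℂ ∖ (−∞, 0]` set
`Z(λ) = ∫ det(1 − i √(λ/N) A)^{−N} exp(−N Tr(J (1 − i √(λ/N) A)⁻¹ J†)) dγ(A)`.
Then the integrand is `γ`-integrable for every such `λ`, and `Z` is analytic (complex
differentiable) on the cut plane. -/
theorem generating_function_analytic_on_cut_plane (N : ℕ) (hN : 1 ≤ N)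
    (J : Matrix (Fin N) (Fin N) ℂ)
    (μ : Measure (selfAdjoint (Matrix (Fin N) (Fin N) ℂ)))
    (hμ0 : μ ≠ 0)
    (hμinv : ∀ B : selfAdjoint (Matrix (Fin N) (Fin N) ℂ),
      μ.map (fun A => A + B) = μ)
    (hμfin : ∀ K : Set (selfAdjoint (Matrix (Fin N) (Fin N) ℂ)),
      IsCompact K → μ K < ⊤)
    (ν : Measure (selfAdjoint (Matrix (Fin N) (Fin N) ℂ)))
    (hν : ν = μ.withDensity (fun A =>
      ENNReal.ofReal (Real.exp (-(1/2) *
        (Matrix.trace ((A : Matrix (Fin N) (Fin N) ℂ) *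
          (A : Matrix (Fin N) (Fin N) ℂ))).re))))
    (γ : Measure (selfAdjoint (Matrix (Fin N) (Fin N) ℂ)))
    (hγ : γ = (ν Set.univ)⁻¹ • ν) :
    (∀ lam ∈ {z : ℂ | ¬ (z.im = 0 ∧ z.re ≤ 0)},
      Integrable (fun A : selfAdjoint (Matrix (Fin N) (Fin N) ℂ) =>
        (Matrix.det ((1 : Matrix (Fin N) (Fin N) ℂ) -
            (Complex.I * (lam / (N : ℂ)) ^ ((1:ℂ)/2)) •
              (A : Matrix (Fin N) (Fin N) ℂ))) ^ (-(N : ℤ)) *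
          Complex.exp (-(N : ℂ) * Matrix.trace
            (J * ((1 : Matrix (Fin N) (Fin N) ℂ) -
              (Complex.I * (lam / (N : ℂ)) ^ ((1:ℂ)/2)) •
                (A : Matrix (Fin N) (Fin N) ℂ))⁻¹ * Jᴴ))) γ) ∧
    DifferentiableOn ℂ
      (fun lam : ℂ =>
        ∫ A : selfAdjoint (Matrix (Fin N) (Fin N) ℂ),
          (Matrix.det ((1 : Matrix (Fin N) (Fin N) ℂ) -
              (Complex.I * (lam / (N : ℂ)) ^ ((1:ℂ)/2)) •
                (A : Matrix (Fin N) (Fin N) ℂ))) ^ (-(N : ℤ)) *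
            Complex.exp (-(N : ℂ) * Matrix.trace
              (J * ((1 : Matrix (Fin N) (Fin N) ℂ) -
                (Complex.I * (lam / (N : ℂ)) ^ ((1:ℂ)/2)) •
                  (A : Matrix (Fin N) (Fin N) ℂ))⁻¹ * Jᴴ)) ∂γ)
      {z : ℂ | ¬ (z.im = 0 ∧ z.re ≤ 0)} := by
  classical
  have hNpos : 0 < N := hN
  rw [cut_eq_slit]
  -- γ is a finite measure
  haveI hfin : IsFiniteMeasure γ := by
    constructor
    rw [hγ, Measure.smul_apply, smul_eq_mul]
    rcases eq_or_ne (ν Set.univ) 0 with h0 | h0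
    · rw [h0, mul_zero]
      exact ENNReal.zero_lt_top
    rcases eq_or_ne (ν Set.univ) ⊤ with htop | htop
    · rw [htop, ENNReal.inv_top, zero_mul]
      exact ENNReal.zero_lt_top
    · rw [ENNReal.inv_mul_cancel h0 htop]
      exact ENNReal.one_lt_top
  have herm : ∀ A : selfAdjoint (Matrix (Fin N) (Fin N) ℂ),
      (A : Matrix (Fin N) (Fin N) ℂ).IsHermitian := fun A => A.prop
  -- the sup-bound function
  set φ : ℂ → ℝ := fun z =>
    ‖(z/(N:ℂ)) ^ ((1:ℂ)/2)‖ / ((z/(N:ℂ)) ^ ((1:ℂ)/2)).re with hφ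
  have hφpos : ∀ z ∈ Complex.slitPlane, 0 ≤ φ z := by
    intro z hz
    have := sqrt_re_pos (div_nat_mem_slitPlane hz hNpos)
    exact div_nonneg (norm_nonneg _) this.le
  set TJ : ℝ := (Matrix.trace (J * Jᴴ)).re with hTJdef
  have hTJ : 0 ≤ TJ := traceJJ_re_nonneg J
  -- pointwise norm bound
  have hnorm : ∀ z ∈ Complex.slitPlane, ∀ A : selfAdjoint (Matrix (Fin N) (Fin N) ℂ),
      ‖integrand N J z (A : Matrix (Fin N) (Fin N) ℂ)‖
        ≤ φ z ^ (N*N) * Real.exp (N * φ z * TJ) := by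
    intro z hz A
    have hre : 0 < ((z/(N:ℂ)) ^ ((1:ℂ)/2)).re := sqrt_re_pos (div_nat_mem_slitPlane hz hNpos)
    exact norm_integrand_le (herm A) hre J
  -- integrability at every point of the slit plane
  have hint : ∀ lam ∈ Complex.slitPlane,
      Integrable (fun A : selfAdjoint (Matrix (Fin N) (Fin N) ℂ) =>
        integrand N J lam (A : Matrix (Fin N) (Fin N) ℂ)) γ := by
    intro lam hlam
    refine Integrable.mono' (integrable_const (φ lam ^ (N*N) * Real.exp (N * φ lam * TJ)))
      ((f_meas N J lam).aestronglyMeasurable) ?_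
    exact ae_of_all _ fun A => hnorm lam hlam A
  constructor
  · exact fun lam hlam => hint lam hlam
  -- differentiability
  show DifferentiableOn ℂ
    (fun lam : ℂ => ∫ A : selfAdjoint (Matrix (Fin N) (Fin N) ℂ),
      integrand N J lam (A : Matrix (Fin N) (Fin N) ℂ) ∂γ) Complex.slitPlane
  intro x₀ hx₀
  apply DifferentiableAt.differentiableWithinAt
  obtain ⟨ε, hε, hball⟩ := Metric.isOpen_iff.mp Complex.isOpen_slitPlane x₀ hx₀
  set r : ℝ := ε/4 with hrdef
  have hr0 : 0 < r := by positivity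
  have hK : Metric.closedBall x₀ (2*r) ⊆ Complex.slitPlane := by
    refine (Metric.closedBall_subset_ball ?_).trans hball
    rw [hrdef]; linarith
  -- sup of φ on the closed ball
  have hφcont : ContinuousOn φ (Metric.closedBall x₀ (2*r)) := by
    intro z hz
    have hzS : z ∈ Complex.slitPlane := hK hz
    have hzdiv : z / (N:ℂ) ∈ Complex.slitPlane := div_nat_mem_slitPlane hzS hNpos
    have hsq : ContinuousAt (fun y : ℂ => (y/(N:ℂ)) ^ ((1:ℂ)/2)) z :=
      (DifferentiableAt.cpow (differentiableAt_id.div_const _)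
        (differentiableAt_const _) hzdiv).continuousAt
    have hre : 0 < ((z/(N:ℂ)) ^ ((1:ℂ)/2)).re := sqrt_re_pos hzdiv
    exact ((continuous_norm.continuousAt.comp hsq).div
      (Complex.continuous_re.continuousAt.comp hsq) hre.ne').continuousWithinAt
  obtain ⟨zm, hzmK, hzm⟩ := (isCompact_closedBall x₀ (2*r)).exists_isMaxOn
    ⟨x₀, Metric.mem_closedBall_self (by positivity)⟩ hφcont
  rw [isMaxOn_iff] at hzm
  set W : ℝ := φ zm with hWdef
  have hW0 : 0 ≤ W := hφpos zm (hK hzmK)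
  set C : ℝ := W ^ (N*N) * Real.exp (N * W * TJ) with hCdef
  have hCz : ∀ z ∈ Metric.closedBall x₀ (2*r),
      ∀ A : selfAdjoint (Matrix (Fin N) (Fin N) ℂ),
      ‖integrand N J z (A : Matrix (Fin N) (Fin N) ℂ)‖ ≤ C := by
    intro z hz A
    have hzS := hK hz
    refine (hnorm z hzS A).trans ?_
    have hφz : φ z ≤ W := hzm z hz
    have hφz0 : 0 ≤ φ z := hφpos z hzS
    have hexp : Real.exp (N * φ z * TJ) ≤ Real.exp (N * W * TJ) := by
      apply Real.exp_le_exp.mpr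
      apply mul_le_mul_of_nonneg_right _ hTJ
      exact mul_le_mul_of_nonneg_left hφz (Nat.cast_nonneg N)
    exact mul_le_mul (pow_le_pow_left₀ hφz0 hφz _) hexp (Real.exp_pos _).le
      (pow_nonneg hW0 _)
  -- differentiability of the integrand in the parameter, on the slit plane
  have hdiffS : ∀ (A : selfAdjoint (Matrix (Fin N) (Fin N) ℂ)) {z : ℂ},
      z ∈ Complex.slitPlane →
      DifferentiableAt ℂ (fun w => integrand N J w (A : Matrix (Fin N) (Fin N) ℂ)) z :=
    fun A _ hz => f_diffAt hNpos J (herm A) hz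
  -- measurability of the pointwise derivative at x₀ via difference quotients
  have hF'meas : AEStronglyMeasurable
      (fun A : selfAdjoint (Matrix (Fin N) (Fin N) ℂ) =>
        deriv (fun w => integrand N J w (A : Matrix (Fin N) (Fin N) ℂ)) x₀) γ := by
    set δ : ℕ → ℂ := fun m => ((r / (m+1) : ℝ) : ℂ) with hδdef
    have hδ0 : ∀ m, δ m ≠ 0 := by
      intro m
      rw [hδdef]
      simp only [ne_eq, Complex.ofReal_eq_zero]
      exact (by positivity : (0:ℝ) < r / (m+1)).ne'
    have h1 : Filter.Tendsto (fun m : ℕ => r / (m+1 : ℝ)) Filter.atTop (nhds 0) := by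
      have h2 := (tendsto_const_div_atTop_nhds_zero_nat r).comp (Filter.tendsto_add_atTop_nat 1)
      refine h2.congr fun m => ?_
      simp only [Function.comp_apply]
      push_cast
      ring
    have h2 : Filter.Tendsto δ Filter.atTop (nhds (0:ℂ)) := by
      rw [hδdef]
      have h3 := (Complex.continuous_ofReal.tendsto 0).comp h1
      simp only [Function.comp_def, Complex.ofReal_zero] at h3
      exact h3
    have hδtend : Filter.Tendsto (fun m : ℕ => x₀ + δ m) Filter.atTop
        (nhdsWithin x₀ {x₀}ᶜ) := by
      apply tendsto_nhdsWithin_of_tendsto_nhds_of_eventually_within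
      · simpa using tendsto_const_nhds.add h2
      · refine Filter.Eventually.of_forall fun m => ?_
        simp [hδ0 m]
    have hg : ∀ m : ℕ, AEStronglyMeasurable
        (fun A : selfAdjoint (Matrix (Fin N) (Fin N) ℂ) =>
          (integrand N J (x₀ + δ m) (A : Matrix (Fin N) (Fin N) ℂ)
            - integrand N J x₀ (A : Matrix (Fin N) (Fin N) ℂ)) / (x₀ + δ m - x₀)) γ :=
      by
        intro m
        have hm1 := f_meas N J (x₀ + δ m)
        have hm2 := f_meas N J x₀
        refine Measurable.aestronglyMeasurable ?_
        exact (hm1.sub hm2).div_const _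
    have hlim : ∀ᵐ (A : selfAdjoint (Matrix (Fin N) (Fin N) ℂ)) ∂γ, Filter.Tendsto
        (fun m : ℕ => (integrand N J (x₀ + δ m) (A : Matrix (Fin N) (Fin N) ℂ)
            - integrand N J x₀ (A : Matrix (Fin N) (Fin N) ℂ)) / (x₀ + δ m - x₀))
        Filter.atTop
        (nhds (deriv (fun w => integrand N J w (A : Matrix (Fin N) (Fin N) ℂ)) x₀)) := by
      refine ae_of_all _ fun A => ?_
      have hd : HasDerivAt (fun w => integrand N J w (A : Matrix (Fin N) (Fin N) ℂ))
          (deriv (fun w => integrand N J w (A : Matrix (Fin N) (Fin N) ℂ)) x₀) x₀ :=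
        (hdiffS A hx₀).hasDerivAt
      have hk := (hasDerivAt_iff_tendsto_slope.mp hd).comp hδtend
      refine hk.congr fun m => ?_
      simp only [Function.comp_apply]
      rw [slope_def_field]
    exact aestronglyMeasurable_of_tendsto_ae Filter.atTop hg hlim
  -- the dominated-derivative theorem
  have key := hasDerivAt_integral_of_dominated_loc_of_deriv_le (μ := γ)
    (F := fun w A => integrand N J w (A : Matrix (Fin N) (Fin N) ℂ))
    (F' := fun w A => deriv (fun u => integrand N J u (A : Matrix (Fin N) (Fin N) ℂ)) w)
    (x₀ := x₀) (s := Metric.ball x₀ r) (bound := fun _ => C / r) (Metric.ball_mem_nhds x₀ hr0)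
    (Filter.Eventually.of_forall fun w => (f_meas N J w).aestronglyMeasurable)
    (hint x₀ hx₀) hF'meas
    ?_ (integrable_const _) ?_
  · exact key.2.differentiableAt
  · -- derivative bound via the Cauchy estimate
    refine ae_of_all _ fun A x hx => ?_
    have hball_subset : Metric.closedBall x r ⊆ Metric.closedBall x₀ (2*r) := by
      intro y hy
      rw [Metric.mem_closedBall] at hy ⊢
      rw [Metric.mem_ball] at hx
      calc dist y x₀ ≤ dist y x + dist x x₀ := dist_triangle _ _ _
        _ ≤ r + r := add_le_add hy hx.le
        _ = 2*r := by ring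
    have hballS : Metric.closedBall x r ⊆ Complex.slitPlane := hball_subset.trans hK
    have hdc : DiffContOnCl ℂ (fun w => integrand N J w (A : Matrix (Fin N) (Fin N) ℂ))
        (Metric.ball x r) := by
      constructor
      · intro y hy
        exact (hdiffS A (hballS (Metric.ball_subset_closedBall hy))).differentiableWithinAt
      · intro y hy
        have hy' : y ∈ Metric.closedBall x r := Metric.closure_ball_subset_closedBall hy
        exact ((hdiffS A (hballS hy')).continuousAt).continuousWithinAt
    have := Complex.norm_deriv_le_of_forall_mem_sphere_norm_le hr0 hdc
      (fun z hz => hCz z (hball_subset (Metric.sphere_subset_closedBall hz)) A)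
    exact this
  · -- differentiability on the ball
    refine ae_of_all _ fun A x hx => ?_
    have hxS : x ∈ Complex.slitPlane := by
      apply hK
      apply Metric.ball_subset_closedBall
      exact Metric.ball_subset_ball (by linarith) hx
    exact (hdiffS A hxS).hasDerivAt
end

section
/- Let T be a tree (a connected acyclic simple graph) on the vertex set {1,…,n}, n ≥ 1, and let t : E(T) → [0,1] assign a number in [0,1] to each edge of T. Define the symmetric n×n real matrix C by C_{ii} = 1 and, for i ≠ j, C_{ij} = min{ t_e : e an edge on the unique path in T joining i and j }. Then C is positive semidefinite: for every x ∈ ℝⁿ, Σ_{i,j} x_i C_{ij} x_j ≥ 0. -/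
open MeasureTheory
open scoped Classical

private lemma foldr_min_le_one (l : List ℝ) : l.foldr min 1 ≤ 1 := by
  induction l with
  | nil => simp
  | cons a l ih => exact (min_le_right _ _).trans ih

private lemma le_foldr_min_iff (v : ℝ) (l : List ℝ) :
    v ≤ l.foldr min 1 ↔ v ≤ 1 ∧ ∀ a ∈ l, v ≤ a := by
  induction l with
  | nil => simp
  | cons a l ih =>
    simp only [List.foldr_cons, le_min_iff, ih, List.mem_cons]
    constructor
    · rintro ⟨h1, h2, h3⟩
      exact ⟨h2, fun b hb => hb.elim (fun h => h ▸ h1) (h3 b)⟩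
    · rintro ⟨h1, h2⟩
      exact ⟨h2 a (Or.inl rfl), h1, fun b hb => h2 b (Or.inr hb)⟩

private lemma foldr_min_mem (l : List ℝ) : l.foldr min 1 = 1 ∨ l.foldr min 1 ∈ l := by
  induction l with
  | nil => simp
  | cons a l ih =>
    rcases min_cases a (l.foldr min 1) with ⟨h, _⟩ | ⟨h, _⟩
    · right; simp [h]
    · rcases ih with h' | h'
      · left; simpa [h] using h'
      · right; simp only [List.foldr_cons, h]; exact List.mem_cons_of_mem _ h'

/-- the subgraph of `T` with edges of weight at least `s` -/
private def gsub (n : ℕ) (T : SimpleGraph (Fin n)) (t : Sym2 (Fin n) → ℝ) (s : ℝ) :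
    SimpleGraph (Fin n) where
  Adj a b := T.Adj a b ∧ s ≤ t s(a, b)
  symm := ⟨fun a b h => ⟨h.1.symm, by rw [Sym2.eq_swap]; exact h.2⟩⟩
  loopless := ⟨fun a h => T.loopless.irrefl a h.1⟩

private lemma mem_gsub_edgeSet {n : ℕ} {T : SimpleGraph (Fin n)} {t : Sym2 (Fin n) → ℝ}
    {s : ℝ} {e : Sym2 (Fin n)} :
    e ∈ (gsub n T t s).edgeSet ↔ e ∈ T.edgeSet ∧ s ≤ t e := by
  induction e using Sym2.ind with
  | _ a b => simp [gsub, SimpleGraph.mem_edgeSet]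

private lemma gsub_le {n : ℕ} (T : SimpleGraph (Fin n)) (t : Sym2 (Fin n) → ℝ) (s : ℝ) :
    gsub n T t s ≤ T := fun _ _ h => h.1

/-- the quadratic form of a reachability kernel is nonnegative -/
private lemma kernel_psd {n : ℕ} (G : SimpleGraph (Fin n)) (x : Fin n → ℝ) :
    0 ≤ ∑ i, ∑ j, x i * (if G.Reachable i j then (1:ℝ) else 0) * x j := by
  classical
  set cc := G.connectedComponentMk with hcc
  have h1 : ∀ i j : Fin n, x i * (if G.Reachable i j then (1:ℝ) else 0) * x j
      = if cc i = cc j then x i * x j else 0 := by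
    intro i j
    by_cases h : G.Reachable i j
    · rw [if_pos h, if_pos (SimpleGraph.ConnectedComponent.eq.mpr h)]; ring
    · rw [if_neg h, if_neg (fun hc => h (SimpleGraph.ConnectedComponent.eq.mp hc))]; ring
  have h2 : ∀ i : Fin n, ∑ j, (if cc i = cc j then x i * x j else 0)
      = x i * ∑ j ∈ Finset.univ.filter (fun j => cc j = cc i), x j := by
    intro i
    rw [Finset.mul_sum, Finset.sum_filter]
    exact Finset.sum_congr rfl fun j _ => by by_cases h : cc i = cc j <;> simp [h, eq_comm]
  have key : ∑ i, ∑ j, x i * (if G.Reachable i j then (1:ℝ) else 0) * x j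
      = ∑ c ∈ Finset.univ.image cc,
          (∑ i ∈ Finset.univ.filter (fun i => cc i = c), x i)
            * (∑ j ∈ Finset.univ.filter (fun j => cc j = c), x j) := by
    simp only [h1, h2]
    rw [← Finset.sum_fiberwise_of_maps_to
      (fun i _ => Finset.mem_image_of_mem cc (Finset.mem_univ i))
      (fun i => x i * ∑ j ∈ Finset.univ.filter (fun j => cc j = cc i), x j)]
    refine Finset.sum_congr rfl fun c _ => ?_
    rw [Finset.sum_mul]
    refine Finset.sum_congr rfl fun i hi => ?_
    rw [Finset.mem_filter] at hi
    rw [hi.2]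
  rw [key]
  exact Finset.sum_nonneg fun c _ => mul_self_nonneg _

noncomputable def treeCovariance (n : ℕ) (T : SimpleGraph (Fin n))
    (t : Sym2 (Fin n) → ℝ) (i j : Fin n) : ℝ :=
  sSup {r : ℝ | ∃ w : T.Walk i j, r = ((w.edges.map t).foldr min 1)}

private lemma treeCov_spec {n : ℕ} (T : SimpleGraph (Fin n)) (hT : T.Connected)
    (t : Sym2 (Fin n) → ℝ) (i j : Fin n) :
    (∃ w : T.Walk i j, treeCovariance n T t i j = (w.edges.map t).foldr min 1) ∧
      ∀ w : T.Walk i j, ((w.edges.map t).foldr min 1) ≤ treeCovariance n T t i j := by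
  set S := {r : ℝ | ∃ w : T.Walk i j, r = ((w.edges.map t).foldr min 1)} with hS
  have hfin : S.Finite := by
    refine Set.Finite.subset (Set.Finite.insert 1 ((T.edgeSet.toFinite).image t)) ?_
    rintro r ⟨w, rfl⟩
    rcases foldr_min_mem (w.edges.map t) with h | h
    · exact Or.inl h
    · rw [List.mem_map] at h
      obtain ⟨e, he, heq⟩ := h
      exact Or.inr ⟨e, w.edges_subset_edgeSet he, heq⟩
  have hne : S.Nonempty := ⟨_, (hT i j).some, rfl⟩
  have hmem : sSup S ∈ S := hne.csSup_mem hfin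
  exact ⟨hmem, fun w => le_csSup hfin.bddAbove ⟨w, rfl⟩⟩

private lemma le_treeCov_iff {n : ℕ} (T : SimpleGraph (Fin n)) (hT : T.Connected)
    (t : Sym2 (Fin n) → ℝ) {s : ℝ} (hs : s ≤ 1) (i j : Fin n) :
    s ≤ treeCovariance n T t i j ↔ (gsub n T t s).Reachable i j := by
  obtain ⟨⟨w0, hw0⟩, hub⟩ := treeCov_spec T hT t i j
  constructor
  · intro h
    rw [hw0] at h
    rw [le_foldr_min_iff] at h
    refine ⟨w0.transfer (gsub n T t s) fun e he => ?_⟩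
    exact mem_gsub_edgeSet.mpr ⟨w0.edges_subset_edgeSet he,
      h.2 (t e) (List.mem_map_of_mem (f := t) he)⟩
  · rintro ⟨p⟩
    have hsub : ∀ e ∈ p.edges, e ∈ T.edgeSet := fun e he =>
      (mem_gsub_edgeSet.mp (p.edges_subset_edgeSet he)).1
    refine le_trans ?_ (hub (p.transfer T hsub))
    rw [le_foldr_min_iff]
    refine ⟨hs, fun a ha => ?_⟩
    rw [SimpleGraph.Walk.edges_transfer, List.mem_map] at ha
    obtain ⟨e, he, rfl⟩ := ha
    exact (mem_gsub_edgeSet.mp (p.edges_subset_edgeSet he)).2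

private lemma integral_ind {C : ℝ} (h0 : 0 ≤ C) (h1 : C ≤ 1) :
    ∫ s in (0:ℝ)..1, (if s ≤ C then (1:ℝ) else 0) = C := by
  have heq : ∀ s : ℝ, (if s ≤ C then (1:ℝ) else 0)
      = Set.indicator {u : ℝ | u ≤ C} (fun _ => (1:ℝ)) s := by
    intro s
    by_cases h : s ≤ C <;> simp [Set.indicator_apply, h]
  rw [intervalIntegral.integral_congr (fun s _ => heq s)]
  rw [intervalIntegral.integral_indicator (Set.mem_Icc.mpr ⟨h0, h1⟩)]
  simp

private lemma ind_antitone (C : ℝ) : Antitone (fun s : ℝ => if s ≤ C then (1:ℝ) else 0) := by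
  intro a b hab
  by_cases hb : b ≤ C
  · simp [hb, hab.trans hb]
  · by_cases ha : a ≤ C <;> simp [ha, hb]

set_option maxHeartbeats 1000000 in
/-- **Positivity of the tree covariance** (positivity of the matrix `C_T`, see
\cite{BKAR}): for a tree `T` on `{1,…,n}` and weakening parameters `t_e ∈ [0,1]` on its
edges, the symmetric matrix `C` with `C_{ii} = 1` and
`C_{ij} = min{ t_e : e ∈ P^T_{i↔j} }` is positive semidefinite:
`Σ_{i,j} x_i C_{ij} x_j ≥ 0` for every `x ∈ ℝⁿ`. -/
theorem treeCovariance_posSemidef (n : ℕ) (hn : 1 ≤ n)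
    (T : SimpleGraph (Fin n)) (hT : T.IsTree)
    (t : Sym2 (Fin n) → ℝ) (ht : ∀ e ∈ T.edgeSet, t e ∈ Set.Icc (0:ℝ) 1)
    (x : Fin n → ℝ) :
    0 ≤ ∑ i : Fin n, ∑ j : Fin n, x i * treeCovariance n T t i j * x j := by
  classical
  have hconn := hT.isConnected
  set C : Fin n → Fin n → ℝ := fun i j => treeCovariance n T t i j with hC
  -- bounds on C
  have hC0 : ∀ i j, 0 ≤ C i j := by
    intro i j
    show (0:ℝ) ≤ treeCovariance n T t i j
    rw [le_treeCov_iff T hconn t zero_le_one i j]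
    obtain ⟨p⟩ := hconn i j
    exact ⟨p.transfer _ fun e he => mem_gsub_edgeSet.mpr
      ⟨p.edges_subset_edgeSet he, (ht e (p.edges_subset_edgeSet he)).1⟩⟩
  have hC1 : ∀ i j, C i j ≤ 1 := by
    intro i j
    obtain ⟨⟨w0, hw0⟩, _⟩ := treeCov_spec T hconn t i j
    show treeCovariance n T t i j ≤ 1
    rw [hw0]
    exact foldr_min_le_one _
  -- each entry is an integral
  have hint : ∀ i j, C i j = ∫ s in (0:ℝ)..1, (if s ≤ C i j then (1:ℝ) else 0) :=
    fun i j => (integral_ind (hC0 i j) (hC1 i j)).symm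
  -- integrability
  have hii : ∀ i j : Fin n, IntervalIntegrable
      (fun s => x i * (if s ≤ C i j then (1:ℝ) else 0) * x j) volume 0 1 := by
    intro i j
    exact (((ind_antitone (C i j)).intervalIntegrable).const_mul (x i)).mul_const (x j)
  calc (0:ℝ) ≤ ∫ s in (0:ℝ)..1, ∑ i, ∑ j,
        x i * (if s ≤ C i j then (1:ℝ) else 0) * x j := by
        refine intervalIntegral.integral_nonneg zero_le_one fun s hs => ?_
        have hker := kernel_psd (gsub n T t s) x
        have : ∀ i j : Fin n, (if s ≤ C i j then (1:ℝ) else 0)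
            = (if (gsub n T t s).Reachable i j then (1:ℝ) else 0) := by
          intro i j
          by_cases h : s ≤ C i j
          · rw [if_pos h, if_pos ((le_treeCov_iff T hconn t hs.2 i j).mp h)]
          · rw [if_neg h, if_neg (fun hr => h ((le_treeCov_iff T hconn t hs.2 i j).mpr hr))]
        simpa only [this] using hker
    _ = ∑ i, ∑ j, ∫ s in (0:ℝ)..1, x i * (if s ≤ C i j then (1:ℝ) else 0) * x j := by
        have h3 : ∀ i : Fin n,
            ∫ s in (0:ℝ)..1, ∑ j, x i * (if s ≤ C i j then (1:ℝ) else 0) * x j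
              = ∑ j, ∫ s in (0:ℝ)..1, x i * (if s ≤ C i j then (1:ℝ) else 0) * x j :=
          fun i => intervalIntegral.integral_finset_sum
            (f := fun j s => x i * (if s ≤ C i j then (1:ℝ) else 0) * x j) fun j _ => hii i j
        have hsum : ∀ i : Fin n, IntervalIntegrable
            (fun s => ∑ j, x i * (if s ≤ C i j then (1:ℝ) else 0) * x j) volume 0 1 := by
          intro i
          have h := IntervalIntegrable.sum (μ := volume) (a := 0) (b := 1) Finset.univ
            (f := fun j s => x i * (if s ≤ C i j then (1:ℝ) else 0) * x j) (fun j _ => hii i j)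
          rw [Finset.sum_fn] at h
          exact h
        have h4 : ∫ s in (0:ℝ)..1, ∑ i, ∑ j, x i * (if s ≤ C i j then (1:ℝ) else 0) * x j
            = ∑ i, ∫ s in (0:ℝ)..1, ∑ j, x i * (if s ≤ C i j then (1:ℝ) else 0) * x j :=
          intervalIntegral.integral_finset_sum
            (f := fun i s => ∑ j, x i * (if s ≤ C i j then (1:ℝ) else 0) * x j) fun i _ =>
              hsum i
        rw [h4]
        exact Finset.sum_congr rfl fun i _ => h3 i
    _ = ∑ i, ∑ j, x i * C i j * x j := by
        refine Finset.sum_congr rfl fun i _ => Finset.sum_congr rfl fun j _ => ?_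
        rw [intervalIntegral.integral_mul_const, intervalIntegral.integral_const_mul,
          ← hint i j]
end
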